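/- Let f, g ∈ F be given by admissible linear systems 𝒜_f = (u_f, A_f, v_f) and 𝒜_g = (u_g, A_g, v_g), and let 𝒜_f + 𝒜_g = (e₁, [[A_f, −A_f u_fᵀ u_g], [0, A_g]], [v_f; v_g]) and 𝒜_f · 𝒜_g = (e₁, [[A_f, −v_f u_g], [0, A_g]], [0; v_g]) be the ALSs for f + g and f g built from them. Then the K-linear spans of the left families satisfy L(𝒜_f + 𝒜_g) = L(𝒜_f) + L(𝒜_g) (sum of K-subspaces of F), and L(𝒜_f · 𝒜_g) = L(𝒜_f) g + L(𝒜_g), where L(𝒜_f) g = { w g : w ∈ L(𝒜_f) }; in particular L(𝒜_g) ⊆ L(𝒜_f · 𝒜_g). -/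

import Mathlib

open Matrix

def e1Row (F : Type*) [Semiring F] (n : ℕ) [NeZero n] : Matrix (Fin 1) (Fin n) F :=
  Matrix.of fun _ j => if j = 0 then 1 else 0

theorem span_fromRows {K F : Type*} [Field K] [DivisionRing F] [Algebra K F]
    {nf ng : ℕ} (X : Matrix (Fin nf) (Fin 1) F) (Y : Matrix (Fin ng) (Fin 1) F) :
    Submodule.span K (Set.range fun p : Fin nf ⊕ Fin ng => (fromRows X Y) p 0)
      = Submodule.span K (Set.range fun i => X i 0)
        ⊔ Submodule.span K (Set.range fun j => Y j 0) := by
  have h : (fun p : Fin nf ⊕ Fin ng => (fromRows X Y) p 0)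
      = Sum.elim (fun i => X i 0) (fun j => Y j 0) := by
    ext (i | j) <;> rfl
  rw [h, Set.Sum.elim_range, Submodule.span_union]

theorem span_add_ite {K F : Type*} [Field K] [DivisionRing F] [Algebra K F]
    {n : ℕ} [NeZero n] (a : Fin n → F) (S : Submodule K F) (y : F) (hy : y ∈ S) :
    Submodule.span K (Set.range fun i => a i + (if i = 0 then y else 0)) ⊔ S
      = Submodule.span K (Set.range a) ⊔ S := by
  apply le_antisymm
  · apply sup_le _ le_sup_right
    rw [Submodule.span_le]
    rintro x ⟨i, rfl⟩
    refine add_mem (le_sup_left (α := Submodule K F)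
      (Submodule.subset_span ⟨i, rfl⟩)) ?_
    split_ifs
    · exact le_sup_right (α := Submodule K F) hy
    · exact zero_mem _
  · apply sup_le _ le_sup_right
    rw [Submodule.span_le]
    rintro x ⟨i, rfl⟩
    have h : a i = (a i + (if i = 0 then y else 0)) - (if i = 0 then y else 0) :=
      (add_sub_cancel_right _ _).symm
    rw [h]
    refine sub_mem (le_sup_left (α := Submodule K F)
      (Submodule.subset_span ⟨i, rfl⟩)) ?_
    split_ifs
    · exact le_sup_right (α := Submodule K F) hy
    · exact zero_mem _

theorem inv_unique' {n F : Type*} [Fintype n] [DecidableEq n] [Ring F]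
    {A B X : Matrix n n F} (hBA : B * A = 1) (hAX : A * X = 1) : B = X := by
  calc B = B * (A * X) := by rw [hAX, mul_one]
    _ = (B * A) * X := by rw [Matrix.mul_assoc]
    _ = X := by rw [hBA, one_mul]

theorem left_family_spans {K F : Type*} [Field K] [DivisionRing F] [Algebra K F]
    {nf ng : ℕ} [NeZero nf] [NeZero ng]
    (f g : F)
    (Af Bf : Matrix (Fin nf) (Fin nf) F) (vf : Matrix (Fin nf) (Fin 1) K)
    (Ag Bg : Matrix (Fin ng) (Fin ng) F) (vg : Matrix (Fin ng) (Fin 1) K)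
    (hAf : Af * Bf = 1) (hAf' : Bf * Af = 1)
    (hAg : Ag * Bg = 1) (hAg' : Bg * Ag = 1)
    (hf : f = (e1Row F nf * Bf * vf.map (algebraMap K F)) 0 0)
    (hg : g = (e1Row F ng * Bg * vg.map (algebraMap K F)) 0 0)
    (Asum Bsum : Matrix (Fin nf ⊕ Fin ng) (Fin nf ⊕ Fin ng) F)
    (hAsum : Asum = fromBlocks Af
      (-(Af * Matrix.single (0 : Fin nf) (0 : Fin ng) (1 : F))) 0 Ag)
    (hBsum : Asum * Bsum = 1) (hBsum' : Bsum * Asum = 1)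
    (Aprod Bprod : Matrix (Fin nf ⊕ Fin ng) (Fin nf ⊕ Fin ng) F)
    (hAprod : Aprod = fromBlocks Af (-(vf.map (algebraMap K F) * e1Row F ng)) 0 Ag)
    (hBprod : Aprod * Bprod = 1) (hBprod' : Bprod * Aprod = 1) :
    (Submodule.span K (Set.range fun p => (Bsum *
        fromRows (vf.map (algebraMap K F)) (vg.map (algebraMap K F))) p 0)
      = Submodule.span K (Set.range fun p => (Bf * vf.map (algebraMap K F)) p 0)
        ⊔ Submodule.span K (Set.range fun p => (Bg * vg.map (algebraMap K F)) p 0)) ∧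
    (Submodule.span K (Set.range fun p => (Bprod *
        fromRows (0 : Matrix (Fin nf) (Fin 1) F) (vg.map (algebraMap K F))) p 0)
      = Submodule.map (LinearMap.mulRight K g)
          (Submodule.span K (Set.range fun p => (Bf * vf.map (algebraMap K F)) p 0))
        ⊔ Submodule.span K (Set.range fun p => (Bg * vg.map (algebraMap K F)) p 0)) ∧
    (Submodule.span K (Set.range fun p => (Bg * vg.map (algebraMap K F)) p 0)
      ≤ Submodule.span K (Set.range fun p => (Bprod *
          fromRows (0 : Matrix (Fin nf) (Fin 1) F) (vg.map (algebraMap K F))) p 0)) := by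
  set vfF := vf.map (algebraMap K F) with hvfF
  set vgF := vg.map (algebraMap K F) with hvgF
  set E := Matrix.single (0 : Fin nf) (0 : Fin ng) (1 : F) with hE
  -- identify Bsum
  have hXsum : Asum * fromBlocks Bf (E * Bg) 0 Bg = 1 := by
    rw [hAsum, fromBlocks_multiply, ← fromBlocks_one, fromBlocks_inj]
    refine ⟨by simp [hAf], ?_, by simp, by simp [hAg]⟩
    simp [Matrix.mul_assoc]
  have hBsumEq : Bsum = fromBlocks Bf (E * Bg) 0 Bg := inv_unique' hBsum' hXsum
  -- identify Bprod
  have hXprod : Aprod * fromBlocks Bf (Bf * vfF * e1Row F ng * Bg) 0 Bg = 1 := by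
    rw [hAprod, fromBlocks_multiply, ← fromBlocks_one, fromBlocks_inj]
    refine ⟨by simp [hAf], ?_, by simp, by simp [hAg]⟩
    simp only [Matrix.mul_assoc, Matrix.neg_mul]
    rw [← Matrix.mul_assoc Af Bf, hAf, Matrix.one_mul]
    exact add_neg_cancel _
  have hBprodEq : Bprod = fromBlocks Bf (Bf * vfF * e1Row F ng * Bg) 0 Bg :=
    inv_unique' hBprod' hXprod
  -- compute products
  have hsumRows : Bsum * fromRows vfF vgF
      = fromRows (Bf * vfF + E * (Bg * vgF)) (Bg * vgF) := by
    rw [hBsumEq, fromBlocks_mul_fromRows]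
    simp [Matrix.mul_assoc]
  have hprodRows : Bprod * fromRows (0 : Matrix (Fin nf) (Fin 1) F) vgF
      = fromRows ((Bf * vfF) * (e1Row F ng * Bg * vgF)) (Bg * vgF) := by
    rw [hBprodEq, fromBlocks_mul_fromRows]
    simp [Matrix.mul_assoc]
  -- entrywise facts
  have hEentry : ∀ i : Fin nf, (E * (Bg * vgF)) i 0
      = if i = 0 then (Bg * vgF) 0 0 else 0 := by
    intro i
    simp only [hE, Matrix.mul_apply, Matrix.single, Matrix.of_apply, boole_mul,
      Finset.sum_ite_eq, Finset.mem_univ, if_true]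
    by_cases h : i = 0 <;> simp [h, eq_comm]
  have hgentry : ∀ i : Fin nf, ((Bf * vfF) * (e1Row F ng * Bg * vgF)) i 0
      = (Bf * vfF) i 0 * g := by
    intro i
    rw [hg]
    simp [Matrix.mul_apply, Fin.sum_univ_one]
  -- first conjunct
  have h1 : Submodule.span K (Set.range fun p => (Bsum * fromRows vfF vgF) p 0)
      = Submodule.span K (Set.range fun p => (Bf * vfF) p 0)
        ⊔ Submodule.span K (Set.range fun p => (Bg * vgF) p 0) := by
    rw [hsumRows, span_fromRows]
    have hfun : (fun i => (Bf * vfF + E * (Bg * vgF)) i 0)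
        = fun i => (Bf * vfF) i 0 + (if i = 0 then (Bg * vgF) 0 0 else 0) := by
      funext i
      rw [Matrix.add_apply, hEentry]
    rw [hfun]
    exact span_add_ite _ _ _ (Submodule.subset_span ⟨0, rfl⟩)
  -- second conjunct
  have h2 : Submodule.span K
        (Set.range fun p => (Bprod * fromRows (0 : Matrix (Fin nf) (Fin 1) F) vgF) p 0)
      = Submodule.map (LinearMap.mulRight K g)
          (Submodule.span K (Set.range fun p => (Bf * vfF) p 0))
        ⊔ Submodule.span K (Set.range fun p => (Bg * vgF) p 0) := by
    have hmap : Submodule.map (LinearMap.mulRight K g)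
        (Submodule.span K (Set.range fun p => (Bf * vfF) p 0))
        = Submodule.span K
          (Set.range fun i => ((Bf * vfF) * (e1Row F ng * Bg * vgF)) i 0) := by
      rw [Submodule.map_span, ← Set.range_comp]
      have hc : (⇑(LinearMap.mulRight K g) ∘ fun p => (Bf * vfF) p 0)
          = fun i => ((Bf * vfF) * (e1Row F ng * Bg * vgF)) i 0 :=
        funext fun i => (hgentry i).symm
      rw [hc]
    rw [hprodRows, span_fromRows, hmap]
  exact ⟨h1, h2, h2 ▸ le_sup_right⟩
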